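/- Let L, M be positive integers, θ : Fin L → ℂ, P and R_B be M×M complex matrices, S an L×L real symmetric matrix, and β, c real numbers. Let R_c be the (M + L·M)×(M + L·M) complex block-diagonal matrix with upper-left M×M block β • R_B, lower-right (L·M)×(L·M) block c • ((S mapped into ℂ) ⊗ R_B), and zero off-diagonal blocks. Let Q be the (M + L·M)×M complex matrix whose top M×M block is P and whose bottom (L·M)×M block is Θ ⊗ P, where Θ is the L×1 column matrix with entries θ. Then Qᵀ · R_c · Q* = δ_U² • (Pᵀ · R_B · P*), where δ_U² = β + c · (Σ_{i,j} conj(θ_i) S_{ij} θ_j) ∈ ℂ. -/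

import Mathlib

open Matrix Kronecker

/-- Algebraic core of Lemma 1: the effective uplink covariance collapses to
`δ_U² • (Pᵀ R_B P*)` with `δ_U² = β + c · θᴴ S θ`. -/
theorem stmt2 (L M : ℕ) (hL : 0 < L) (hM : 0 < M)
    (θ : Fin L → ℂ) (P RB : Matrix (Fin M) (Fin M) ℂ)
    (S : Matrix (Fin L) (Fin L) ℝ) (hS : Sᵀ = S) (β c : ℝ)
    (Θ : Matrix (Fin L) (Fin 1) ℂ) (hΘ : ∀ i j, Θ i j = θ i)
    (Rc : Matrix (Fin M ⊕ Fin L × Fin M) (Fin M ⊕ Fin L × Fin M) ℂ)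
    (hRc : Rc = Matrix.fromBlocks ((β : ℂ) • RB) 0 0
        ((c : ℂ) • ((S.map (fun x => (x : ℂ))) ⊗ₖ RB)))
    (Q : Matrix (Fin M ⊕ Fin L × Fin M) (Fin M) ℂ)
    (hQ : Q = Matrix.fromRows P
        ((Θ ⊗ₖ P).reindex (Equiv.refl (Fin L × Fin M)) (Equiv.uniqueProd (Fin M) (Fin 1)))) :
    Qᵀ * Rc * Q.map star
      = ((β : ℂ) + (c : ℂ) * ∑ i, ∑ j, star (θ i) * (S i j : ℂ) * θ j)
          • (Pᵀ * RB * P.map star) := by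
  subst hRc hQ
  have hSsym : ∀ i j, S i j = S j i := fun i j => congrFun (congrFun hS j) i
  ext a b
  simp only [mul_apply, transpose_apply, map_apply, Matrix.smul_apply, Fintype.sum_sum_type,
    fromBlocks_apply₁₁, fromBlocks_apply₁₂, fromBlocks_apply₂₁, fromBlocks_apply₂₂,
    fromRows_apply_inl, fromRows_apply_inr, reindex_apply, submatrix_apply,
    Equiv.refl_symm, Equiv.refl_apply, kroneckerMap_apply, Matrix.smul_apply,
    Matrix.zero_apply, mul_zero, zero_mul, Finset.sum_const_zero, add_zero, zero_add, hΘ,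
    smul_eq_mul, Fintype.sum_prod_type, Equiv.uniqueProd_symm_apply, star_mul']
  have hinner : ∀ x : Fin M, (∑ y, P y a * ((β:ℂ) * RB y x)) = (β:ℂ) * ∑ y, P y a * RB y x := by
    intro x; rw [Finset.mul_sum]; exact Finset.sum_congr rfl fun y _ => by ring
  have hA : (∑ x, (∑ y, P y a * ((β:ℂ) * RB y x)) * star (P x b))
      = (β:ℂ) * ∑ x, (∑ y, P y a * RB y x) * star (P x b) := by
    rw [Finset.mul_sum]
    exact Finset.sum_congr rfl fun x _ => by rw [hinner x]; ring
  have hstep1 : ∀ (j : Fin L) (l : Fin M),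
      (∑ i, ∑ k, θ i * P k a * ((c:ℂ) * ((S i j : ℂ) * RB k l)))
        = (∑ i, (c:ℂ) * θ i * (S i j : ℂ)) * (∑ k, P k a * RB k l) := by
    intro j l
    rw [Finset.sum_mul_sum]
    exact Finset.sum_congr rfl fun i _ => Finset.sum_congr rfl fun k _ => by ring
  have hB : (∑ j, ∑ l, (∑ i, ∑ k, θ i * P k a * ((c:ℂ) * ((S i j : ℂ) * RB k l)))
        * (star (θ j) * star (P l b)))
      = ((c:ℂ) * ∑ i, ∑ j, star (θ i) * (S i j : ℂ) * θ j)
        * ∑ x, (∑ y, P y a * RB y x) * star (P x b) := by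
    have h2 : (∑ j, ∑ l, (∑ i, ∑ k, θ i * P k a * ((c:ℂ) * ((S i j : ℂ) * RB k l)))
          * (star (θ j) * star (P l b)))
        = (∑ j, (∑ i, (c:ℂ) * θ i * (S i j : ℂ)) * star (θ j))
          * (∑ l, (∑ k, P k a * RB k l) * star (P l b)) := by
      rw [Finset.sum_mul_sum]
      exact Finset.sum_congr rfl fun j _ => Finset.sum_congr rfl fun l _ => by
        rw [hstep1 j l]; ring
    rw [h2]
    congr 1
    calc (∑ j, (∑ i, (c:ℂ) * θ i * (S i j : ℂ)) * star (θ j))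
        = ∑ j, ∑ i, (c:ℂ) * θ i * (S i j : ℂ) * star (θ j) := by
          exact Finset.sum_congr rfl fun j _ => by rw [Finset.sum_mul]
      _ = ∑ i, ∑ j, (c:ℂ) * θ j * (S j i : ℂ) * star (θ i) := rfl
      _ = (c:ℂ) * ∑ i, ∑ j, star (θ i) * (S i j : ℂ) * θ j := by
          rw [Finset.mul_sum]
          exact Finset.sum_congr rfl fun i _ => by
            rw [Finset.mul_sum]
            exact Finset.sum_congr rfl fun j _ => by rw [hSsym j i]; ring
  rw [hA, hB]
  ring
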